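/- The sequence defined by the recurrence l_i = ((d+1)l_{i-1} - l_{i-2})/d with l₁ = ((d+1)/d)·l₀ satisfies, for all 1 ≤ j ≤ k: l_{k+1} = (1 + Σ_{i=1}^{j} d^{-i})·l_{k-j+1} - (Σ_{i=1}^{j} d^{-i})·l_{k-j}, where d > 0. -/
import Mathlib

lemma geo_shift (x : ℝ) (j : ℕ) :
    ∑ i ∈ Finset.Icc 1 (j + 1), x ^ i = x * (1 + ∑ i ∈ Finset.Icc 1 j, x ^ i) := by
  induction j with
  | zero => simp
  | succ j ih =>
    conv_rhs => rw [Finset.sum_Icc_succ_top (by omega : 1 ≤ j + 1)]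
    rw [Finset.sum_Icc_succ_top (by omega : 1 ≤ j + 1 + 1), ih]
    ring

/-- For the recurrence `l_i = ((d+1) l_{i-1} - l_{i-2})/d` with
`l₁ = ((d+1)/d) l₀` and `d > 0`, for all `1 ≤ j ≤ k`:
`l_{k+1} = (1 + Σ_{i=1}^j d^{-i}) l_{k-j+1} - (Σ_{i=1}^j d^{-i}) l_{k-j}`. -/
theorem recurrence_unrolling
    (d : ℝ) (hd : 0 < d) (l : ℕ → ℝ)
    (hrec : ∀ i : ℕ, l (i + 2) = ((d + 1) * l (i + 1) - l i) / d)
    (hinit : l 1 = ((d + 1) / d) * l 0) :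
    ∀ j k : ℕ, 1 ≤ j → j ≤ k →
      l (k + 1) = (1 + ∑ i ∈ Finset.Icc 1 j, (1 / d) ^ i) * l (k - j + 1)
        - (∑ i ∈ Finset.Icc 1 j, (1 / d) ^ i) * l (k - j) := by
  have hd' : d ≠ 0 := ne_of_gt hd
  intro j
  induction j with
  | zero => intro k h; omega
  | succ j ih =>
    intro k _ hjk
    rcases Nat.eq_zero_or_pos j with hj0 | hj1
    · subst hj0
      obtain ⟨m, rfl⟩ : ∃ m, k = m + 1 := ⟨k - 1, by omega⟩
      have hr := hrec m
      simp only [Finset.Icc_self, Finset.sum_singleton, pow_one]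
      rw [show m + 1 + 1 = m + 2 from rfl, hr,
        show m + 1 - 1 + 1 = m + 1 by omega, show m + 1 - 1 = m by omega]
      field_simp
    · obtain ⟨n, hn⟩ : ∃ n, k - j = n + 1 := ⟨k - j - 1, by omega⟩
      have H := ih k hj1 (by omega)
      rw [hn] at H
      have hr := hrec n
      rw [geo_shift, show k - (j + 1) = n by omega,
        show n + 1 + 1 = n + 2 from rfl] at *
      rw [H, hr]
      field_simp
      ring
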